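/- Let D be a division ring, A ∈ M_2(D) be a rank 2 (hence invertible) matrix, d a 1-dimensional subspace of D² and e a 1-dimensional subspace of ᵗD². Then R_d ∩ L_e contains a rank 1 matrix that is adjacent to A if and only if d ≠ (A^{−1}e)^⊥, where A^{−1}e = { A^{−1} ᵗv : ᵗv ∈ e } is the 1-dimensional subspace of ᵗD² obtained by applying A^{−1} to the column vectors of e. -/

import Mathlib

open Matrix

variable {D : Type*} [DivisionRing D]

/-- The rank of a matrix over a division ring: the dimension of its row space,
i.e. of the left `D`-subspace of `D^n` spanned by the rows. -/
noncomputable def rowRank {m n : ℕ} (A : Matrix (Fin m) (Fin n) D) : ℕ :=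
  Module.finrank D (Submodule.span D (Set.range fun i => A i))

/-- Two matrices are adjacent if their difference has rank one. -/
def Adjacent {m n : ℕ} (A B : Matrix (Fin m) (Fin n) D) : Prop :=
  rowRank (A - B) = 1

/-- `R(x)`: the set of matrices of the form `ᵗu x` for a fixed row vector `x`. -/
def Rvec {m n : ℕ} (x : Fin n → D) : Set (Matrix (Fin m) (Fin n) D) :=
  { M | ∃ u : Fin m → D, ∀ i j, M i j = u i * x j }

/-- `L(ᵗy)`: the set of matrices of the form `ᵗy v` for a fixed column vector `ᵗy`. -/
def Lvec {m n : ℕ} (y : Fin m → D) : Set (Matrix (Fin m) (Fin n) D) :=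
  { M | ∃ v : Fin n → D, ∀ i j, M i j = y i * v j }

/-- `R_d`: the matrices whose row space is contained in `d`. -/
def Rsub {m n : ℕ} (d : Submodule D (Fin n → D)) : Set (Matrix (Fin m) (Fin n) D) :=
  { M | ∀ i, M i ∈ d }

/-- `L_e`: the matrices whose column space (a right subspace, i.e. a `Dᵐᵒᵖ`-submodule)
is contained in `e`. -/
def Lsub {m n : ℕ} (e : Submodule Dᵐᵒᵖ (Fin m → D)) : Set (Matrix (Fin m) (Fin n) D) :=
  { M | ∀ j, (fun i => M i j) ∈ e }

/-- The orthogonal set of a set `e` of column vectors. -/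
def perpSet {m : ℕ} (e : Set (Fin m → D)) : Set (Fin m → D) :=
  { u | ∀ v ∈ e, ∑ i, u i * v i = 0 }

/-- The `p × q` matrix with upper-left block `B` and zeros elsewhere. -/
def pad {m n : ℕ} (p q : ℕ) (B : Matrix (Fin m) (Fin n) D) :
    Matrix (Fin p) (Fin q) D :=
  Matrix.of fun i j =>
    if hi : (i : ℕ) < m then if hj : (j : ℕ) < n then B ⟨i, hi⟩ ⟨j, hj⟩ else 0 else 0

/-- `φ` is degenerate with respect to `A`. -/
def DegenerateAt {m n p q : ℕ} (φ : Matrix (Fin m) (Fin n) D → Matrix (Fin p) (Fin q) D)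
    (A : Matrix (Fin m) (Fin n) D) : Prop :=
  ∃ x : Fin p → D, x ≠ 0 ∧ ∃ y : Fin q → D, y ≠ 0 ∧
    ∀ M : Matrix (Fin m) (Fin n) D, rowRank M ≤ 1 →
      φ (A + M) - φ A ∈ Rvec y ∪ Lvec x

/-- `φ` is degenerate: degenerate with respect to every matrix. -/
def Degenerate {m n p q : ℕ} (φ : Matrix (Fin m) (Fin n) D → Matrix (Fin p) (Fin q) D) :
    Prop :=
  ∀ A, DegenerateAt φ A

/-- A map (sending `0` to `0`) is degenerate with respect to `0` iff it maps every matrix of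
rank at most one into `R(y) ∪ L(ᵗx)` for some nonzero `y`, `x`. -/
def DegZero {m n p q : ℕ} (φ : Matrix (Fin m) (Fin n) D → Matrix (Fin p) (Fin q) D) :
    Prop :=
  ∃ x : Fin p → D, x ≠ 0 ∧ ∃ y : Fin q → D, y ≠ 0 ∧
    ∀ M : Matrix (Fin m) (Fin n) D, rowRank M ≤ 1 → φ M ∈ Rvec y ∪ Lvec x

/-- A standard adjacency preserver. -/
def Standard {m n p q : ℕ} (φ : Matrix (Fin m) (Fin n) D → Matrix (Fin p) (Fin q) D) :
    Prop :=
  (m ≤ p ∧ n ≤ q ∧ ∃ τ : D ≃+* D, ∃ T : Matrix (Fin p) (Fin p) D,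
    ∃ S : Matrix (Fin q) (Fin q) D, ∃ R : Matrix (Fin p) (Fin q) D,
    IsUnit T ∧ IsUnit S ∧ ∀ A, φ A = T * pad p q (A.map τ) * S + R) ∨
  (n ≤ p ∧ m ≤ q ∧ ∃ σ : D → D, Function.Bijective σ ∧ σ 1 = 1 ∧
    (∀ a b, σ (a + b) = σ a + σ b) ∧ (∀ a b, σ (a * b) = σ b * σ a) ∧
    ∃ T : Matrix (Fin p) (Fin p) D, ∃ S : Matrix (Fin q) (Fin q) D,
    ∃ R : Matrix (Fin p) (Fin q) D, IsUnit T ∧ IsUnit S ∧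
    ∀ A, φ A = T * pad p q (A.map σ).transpose * S + R)

/-- A division ring is EAS if every (unital) ring endomorphism of it is surjective. -/
def EAS (D : Type*) [DivisionRing D] : Prop :=
  ∀ f : D →+* D, Function.Surjective f

/-- A set of matrices is adjacent if any two distinct members are adjacent. -/
def IsAdjacentSet {m n : ℕ} (S : Set (Matrix (Fin m) (Fin n) D)) : Prop :=
  ∀ A ∈ S, ∀ B ∈ S, A ≠ B → Adjacent A B

lemma sherman (u w : Fin 2 → D) :
    (Matrix.of fun i j => -((1 : Matrix (Fin 2) (Fin 2) D) i j + u i * w j)) *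
      (Matrix.of fun i j => u i * w j - (1 : Matrix (Fin 2) (Fin 2) D) i j) =
    1 - Matrix.of (fun i j => u i * ((w 0 * u 0 + w 1 * u 1) * w j)) := by
  ext i j
  fin_cases i <;> fin_cases j <;>
    simp [Matrix.mul_apply, Fin.sum_univ_two, Matrix.one_apply] <;> noncomm_ring

lemma dep_identity (u w : Fin 2 → D) (j : Fin 2) :
    w 0 * (u 0 * w j - (1 : Matrix (Fin 2) (Fin 2) D) 0 j) +
      w 1 * (u 1 * w j - (1 : Matrix (Fin 2) (Fin 2) D) 1 j) =
    (w 0 * u 0 + w 1 * u 1) * w j - w j := by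
  fin_cases j <;> simp [Matrix.one_apply] <;> noncomm_ring

example (r : Dᵐᵒᵖ) (a : D) : r • a = a * r.unop := rfl

lemma aux_rowRank_two (N C : Matrix (Fin 2) (Fin 2) D) (h : C * N = 1) :
    rowRank N = 2 := by
  have key : ∀ u : Fin 2 → D, Matrix.vecMul u N = u 0 • N 0 + u 1 • N 1 := by
    intro u; funext j
    simp [Matrix.vecMul, dotProduct, Fin.sum_univ_two]
  have hspan : Submodule.span D (Set.range fun i => N i) = ⊤ := by
    rw [eq_top_iff]
    intro v _
    have hv : v = Matrix.vecMul (Matrix.vecMul v C) N := by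
      rw [Matrix.vecMul_vecMul, h, Matrix.vecMul_one]
    rw [hv, key]
    exact Submodule.add_mem _
      (Submodule.smul_mem _ _ (Submodule.subset_span ⟨0, rfl⟩))
      (Submodule.smul_mem _ _ (Submodule.subset_span ⟨1, rfl⟩))
  rw [rowRank, hspan, finrank_top]
  exact Module.finrank_fin_fun D

lemma aux_rowRank_one {n : ℕ} (N : Matrix (Fin 2) (Fin n) D)
    (u : Fin 2 → D) (w : Fin n → D) (hw : w ≠ 0) (hu : u ≠ 0)
    (h : ∀ i, N i = u i • w) : rowRank N = 1 := by
  obtain ⟨i, hi⟩ : ∃ i, u i ≠ 0 := by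
    by_contra hc; push_neg at hc; exact hu (funext hc)
  have hspan : Submodule.span D (Set.range fun i => N i) = Submodule.span D {w} := by
    apply le_antisymm
    · rw [Submodule.span_le]
      rintro v ⟨k, rfl⟩
      show N k ∈ _
      rw [h k]
      exact Submodule.smul_mem _ _ (Submodule.mem_span_singleton_self w)
    · rw [Submodule.span_le, Set.singleton_subset_iff]
      have hwN : w = (u i)⁻¹ • N i := by
        rw [h i, smul_smul, inv_mul_cancel₀ hi, one_smul]
      rw [hwN]
      exact Submodule.smul_mem _ _ (Submodule.subset_span ⟨i, rfl⟩)
  rw [rowRank, hspan]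
  exact finrank_span_singleton hw

lemma aux_rowRank_one_of_dep {n : ℕ} (N : Matrix (Fin 2) (Fin n) D)
    (z : Fin 2 → D) (hz : z ≠ 0)
    (hdep : ∀ j, z 0 * N 0 j + z 1 * N 1 j = 0)
    (hN : N ≠ 0) : rowRank N = 1 := by
  have hz' : z 0 ≠ 0 ∨ z 1 ≠ 0 := by
    by_contra hc; push_neg at hc
    apply hz; funext i; fin_cases i
    · exact hc.1
    · exact hc.2
  rcases hz' with h0 | h1
  · have key : ∀ j, N 0 j = (-((z 0)⁻¹ * z 1)) * N 1 j := by
      intro j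
      calc N 0 j = (z 0)⁻¹ * (z 0 * N 0 j) := by
            rw [← mul_assoc, inv_mul_cancel₀ h0, one_mul]
        _ = (z 0)⁻¹ * (-(z 1 * N 1 j)) := by
            rw [eq_neg_of_add_eq_zero_left (hdep j)]
        _ = (-((z 0)⁻¹ * z 1)) * N 1 j := by rw [mul_neg, neg_mul, mul_assoc]
    have hN1 : N 1 ≠ 0 := by
      intro h1
      apply hN
      ext i j
      fin_cases i
      · simpa [h1] using key j
      · simp [h1]
    apply aux_rowRank_one N ![-((z 0)⁻¹ * z 1), 1] (N 1) hN1
    · intro h; have := congrFun h 1; simp at this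
    · intro i; fin_cases i
      · funext j; simpa using key j
      · simp
  · have key : ∀ j, N 1 j = (-((z 1)⁻¹ * z 0)) * N 0 j := by
      intro j
      calc N 1 j = (z 1)⁻¹ * (z 1 * N 1 j) := by
            rw [← mul_assoc, inv_mul_cancel₀ h1, one_mul]
        _ = (z 1)⁻¹ * (-(z 0 * N 0 j)) := by
            rw [eq_neg_of_add_eq_zero_right (hdep j)]
        _ = (-((z 1)⁻¹ * z 0)) * N 0 j := by rw [mul_neg, neg_mul, mul_assoc]
    have hN0 : N 0 ≠ 0 := by
      intro h0
      apply hN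
      ext i j
      fin_cases i
      · simp [h0]
      · simpa [h0] using key j
    apply aux_rowRank_one N ![1, -((z 1)⁻¹ * z 0)] (N 0) hN0
    · intro h; have := congrFun h 0; simp at this
    · intro i; fin_cases i
      · simp
      · funext j; simpa using key j

lemma aux_rowRank_mul {X A B : Matrix (Fin 2) (Fin 2) D} (hBA : B * A = 1) (hAB : A * B = 1) :
    rowRank (X * A) = rowRank X := by
  let f : (Fin 2 → D) ≃ₗ[D] (Fin 2 → D) :=
  { toFun := fun u => Matrix.vecMul u A
    map_add' := fun u v => by
      funext j
      simp [Matrix.vecMul, dotProduct, Fin.sum_univ_two, add_mul]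
      abel
    map_smul' := fun c u => by
      funext j
      simp [Matrix.vecMul, dotProduct, Fin.sum_univ_two, mul_add, mul_assoc]
    invFun := fun u => Matrix.vecMul u B
    left_inv := fun u => by
      simp [Matrix.vecMul_vecMul, hAB, Matrix.vecMul_one]
    right_inv := fun u => by
      simp [Matrix.vecMul_vecMul, hBA, Matrix.vecMul_one] }
  have hr : (fun i => (X * A) i) = ⇑f ∘ (fun i => X i) := by
    funext i; funext j
    simp [Matrix.mul_apply, Matrix.vecMul, dotProduct, f]
  rw [rowRank, hr, Set.range_comp, ← LinearEquiv.coe_coe, ← Submodule.map_span, rowRank]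
  exact LinearEquiv.finrank_map_eq f _

lemma exists_span_gen {R M : Type*} [DivisionRing R] [AddCommGroup M] [Module R M]
    (p : Submodule R M) (hp : Module.finrank R p = 1) :
    ∃ v : M, v ≠ 0 ∧ p = Submodule.span R {v} := by
  obtain ⟨⟨v, hv⟩, hv0, hspan⟩ := finrank_eq_one_iff'.mp hp
  refine ⟨v, ?_, ?_⟩
  · intro h
    apply hv0
    exact Subtype.ext h
  · apply le_antisymm
    · intro w hw
      obtain ⟨c, hc⟩ := hspan ⟨w, hw⟩
      have hc' : c • v = w := congrArg Subtype.val hc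
      rw [← hc']
      exact Submodule.smul_mem _ _ (Submodule.mem_span_singleton_self v)
    · rw [Submodule.span_le, Set.singleton_subset_iff]; exact hv

lemma perp_eq_iff (B : Matrix (Fin 2) (Fin 2) D) (x y : Fin 2 → D)
    (hx : x ≠ 0)
    (hz : ¬ (B 0 0 * y 0 + B 0 1 * y 1 = 0 ∧ B 1 0 * y 0 + B 1 1 * y 1 = 0)) :
    (((Submodule.span D {x} : Submodule D (Fin 2 → D)) : Set (Fin 2 → D)) =
      perpSet (B.mulVec '' ((Submodule.span Dᵐᵒᵖ {y} : Submodule Dᵐᵒᵖ (Fin 2 → D)) :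
        Set (Fin 2 → D)))) ↔
    (x 0 * (B 0 0 * y 0 + B 0 1 * y 1) + x 1 * (B 1 0 * y 0 + B 1 1 * y 1) = 0) := by
  set z0 : D := B 0 0 * y 0 + B 0 1 * y 1 with hz0def
  set z1 : D := B 1 0 * y 0 + B 1 1 * y 1 with hz1def
  have hmem : ∀ u : Fin 2 → D,
      u ∈ perpSet (B.mulVec '' ((Submodule.span Dᵐᵒᵖ {y} : Submodule Dᵐᵒᵖ (Fin 2 → D)) :
        Set (Fin 2 → D))) ↔ u 0 * z0 + u 1 * z1 = 0 := by
    intro u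
    constructor
    · intro h
      have := h (B.mulVec y) ⟨y, Submodule.mem_span_singleton_self y, rfl⟩
      simpa [Matrix.mulVec, dotProduct, Fin.sum_univ_two, hz0def, hz1def] using this
    · intro h v hv
      obtain ⟨v', hv', rfl⟩ := hv
      obtain ⟨r, rfl⟩ := Submodule.mem_span_singleton.mp hv'
      have hBv : ∀ i : Fin 2, (B.mulVec (r • y)) i =
          (B i 0 * y 0 + B i 1 * y 1) * r.unop := by
        intro i
        have hsm : ∀ k : Fin 2, (r • y) k = y k * r.unop := fun k => rfl
        simp only [Matrix.mulVec, dotProduct, Fin.sum_univ_two, hsm]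
        noncomm_ring
      rw [Fin.sum_univ_two, hBv 0, hBv 1]
      calc u 0 * (z0 * r.unop) + u 1 * (z1 * r.unop)
          = (u 0 * z0 + u 1 * z1) * r.unop := by noncomm_ring
        _ = 0 := by rw [h, zero_mul]
  constructor
  · intro hEq
    have hx' : x ∈ perpSet (B.mulVec '' ((Submodule.span Dᵐᵒᵖ {y} :
        Submodule Dᵐᵒᵖ (Fin 2 → D)) : Set (Fin 2 → D))) := by
      rw [← hEq]
      exact Submodule.mem_span_singleton_self x
    exact (hmem x).mp hx'
  · intro ht
    ext u
    rw [SetLike.mem_coe, hmem u]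
    constructor
    · intro hu
      obtain ⟨c, rfl⟩ := Submodule.mem_span_singleton.mp hu
      show c * x 0 * z0 + c * x 1 * z1 = 0
      calc c * x 0 * z0 + c * x 1 * z1 = c * (x 0 * z0 + x 1 * z1) := by noncomm_ring
        _ = 0 := by rw [ht, mul_zero]
    · intro h2
      apply Submodule.mem_span_singleton.mpr
      have hz' : z0 ≠ 0 ∨ z1 ≠ 0 := by tauto
      rcases hz' with hz0 | hz1
      · have hx1 : x 1 ≠ 0 := by
          intro h1
          apply hx
          have hx0 : x 0 = 0 := by
            have h3 := ht
            rw [h1, zero_mul, add_zero] at h3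
            exact (mul_eq_zero.mp h3).resolve_right hz0
          funext i; fin_cases i
          · exact hx0
          · exact h1
        refine ⟨u 1 * (x 1)⁻¹, ?_⟩
        have hxe : x 0 * z0 = -(x 1 * z1) := eq_neg_of_add_eq_zero_left ht
        have hue : u 0 * z0 = -(u 1 * z1) := eq_neg_of_add_eq_zero_left h2
        funext j; fin_cases j
        · show u 1 * (x 1)⁻¹ * x 0 = u 0
          apply mul_right_cancel₀ hz0
          calc (u 1 * (x 1)⁻¹ * x 0) * z0 = u 1 * (x 1)⁻¹ * (x 0 * z0) := by
                rw [mul_assoc]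
            _ = u 1 * (x 1)⁻¹ * -(x 1 * z1) := by rw [hxe]
            _ = -(u 1 * ((x 1)⁻¹ * (x 1 * z1))) := by rw [mul_neg, mul_assoc]
            _ = -(u 1 * z1) := by rw [← mul_assoc ((x 1)⁻¹), inv_mul_cancel₀ hx1, one_mul]
            _ = u 0 * z0 := hue.symm
        · show u 1 * (x 1)⁻¹ * x 1 = u 1
          rw [mul_assoc, inv_mul_cancel₀ hx1, mul_one]
      · have hx0 : x 0 ≠ 0 := by
          intro h0
          apply hx
          have hx1 : x 1 = 0 := by
            have h3 := ht
            rw [h0, zero_mul, zero_add] at h3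
            exact (mul_eq_zero.mp h3).resolve_right hz1
          funext i; fin_cases i
          · exact h0
          · exact hx1
        refine ⟨u 0 * (x 0)⁻¹, ?_⟩
        have hxe : x 1 * z1 = -(x 0 * z0) := eq_neg_of_add_eq_zero_right ht
        have hue : u 1 * z1 = -(u 0 * z0) := eq_neg_of_add_eq_zero_right h2
        funext j; fin_cases j
        · show u 0 * (x 0)⁻¹ * x 0 = u 0
          rw [mul_assoc, inv_mul_cancel₀ hx0, mul_one]
        · show u 0 * (x 0)⁻¹ * x 1 = u 1
          apply mul_right_cancel₀ hz1
          calc (u 0 * (x 0)⁻¹ * x 1) * z1 = u 0 * (x 0)⁻¹ * (x 1 * z1) := by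
                rw [mul_assoc]
            _ = u 0 * (x 0)⁻¹ * -(x 0 * z0) := by rw [hxe]
            _ = -(u 0 * ((x 0)⁻¹ * (x 0 * z0))) := by rw [mul_neg, mul_assoc]
            _ = -(u 0 * z0) := by rw [← mul_assoc ((x 0)⁻¹), inv_mul_cancel₀ hx0, one_mul]
            _ = u 1 * z1 := hue.symm

lemma exists_rank_one_iff (A B : Matrix (Fin 2) (Fin 2) D) (hA : rowRank A = 2)
    (hBA : B * A = 1) (hAB : A * B = 1) (x y : Fin 2 → D) (hx : x ≠ 0) (hy : y ≠ 0) :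
    (∃ M : Matrix (Fin 2) (Fin 2) D,
        M ∈ Rsub (Submodule.span D {x}) ∧ M ∈ Lsub (Submodule.span Dᵐᵒᵖ {y}) ∧
        rowRank M = 1 ∧ Adjacent M A) ↔
    x 0 * (B 0 0 * y 0 + B 0 1 * y 1) + x 1 * (B 1 0 * y 0 + B 1 1 * y 1) ≠ 0 := by
  set w : Fin 2 → D := fun j => x 0 * B 0 j + x 1 * B 1 j with hwdef
  set t : D := x 0 * (B 0 0 * y 0 + B 0 1 * y 1) + x 1 * (B 1 0 * y 0 + B 1 1 * y 1)
    with htdef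
  have htw : t = w 0 * y 0 + w 1 * y 1 := by
    rw [htdef, hwdef]; noncomm_ring
  constructor
  · -- existence implies t ≠ 0
    rintro ⟨M, hR, hL, hrM, hAdj⟩ ht0
    -- extract the structure of M
    choose r hr using fun j => Submodule.mem_span_singleton.mp (hL j)
    obtain ⟨i0, hi0⟩ : ∃ i, y i ≠ 0 := by
      by_contra hc; push_neg at hc; exact hy (funext hc)
    obtain ⟨c', hc'⟩ := Submodule.mem_span_singleton.mp (hR i0)
    set c : D := (y i0)⁻¹ * c' with hcdef
    have hMv : ∀ i j, M i j = y i * (r j).unop := by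
      intro i j
      exact (congrFun (hr j) i).symm
    have hM' : ∀ i j, M i j = y i * (c * x j) := by
      intro i j
      have h1 : c' * x j = y i0 * (r j).unop := by
        have := congrFun hc' j
        simpa [hMv i0 j] using this
      have h2 : (r j).unop = c * x j := by
        rw [hcdef, mul_assoc, h1, ← mul_assoc, inv_mul_cancel₀ hi0, one_mul]
      rw [hMv i j, h2]
    -- the key matrix N
    set u : Fin 2 → D := fun i => y i * c with hudef
    have hN : M * B - 1 =
        Matrix.of fun i j => u i * w j - (1 : Matrix (Fin 2) (Fin 2) D) i j := by
      ext i j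
      simp only [Matrix.sub_apply, Matrix.mul_apply, Fin.sum_univ_two, Matrix.of_apply,
        hM' i 0, hM' i 1, hudef, hwdef]
      noncomm_ring
    have hs0 : w 0 * u 0 + w 1 * u 1 = 0 := by
      have e1 : w 0 * (y 0 * c) + w 1 * (y 1 * c) = (w 0 * y 0 + w 1 * y 1) * c := by
        noncomm_ring
      rw [hudef]
      simp only []
      rw [e1, ← htw, ht0, zero_mul]
    have hCN : (Matrix.of fun i j =>
        -((1 : Matrix (Fin 2) (Fin 2) D) i j + u i * w j)) * (M * B - 1) = 1 := by
      rw [hN, sherman u w, hs0]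
      have h0 : (Matrix.of fun i j : Fin 2 => u i * ((0:D) * w j)) =
          (0 : Matrix (Fin 2) (Fin 2) D) := by
        ext i j; simp
      rw [h0, sub_zero]
    have hrk2 : rowRank (M * B - 1) = 2 := aux_rowRank_two _ _ hCN
    have hMA : (M * B - 1) * A = M - A := by
      rw [sub_mul, Matrix.mul_assoc, hBA, Matrix.mul_one, Matrix.one_mul]
    have hrk1 : rowRank (M * B - 1) = 1 := by
      have := hAdj
      unfold Adjacent at this
      rw [← hMA, aux_rowRank_mul hBA hAB] at this
      exact this
    omega
  · -- t ≠ 0 implies existence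
    intro ht
    set M : Matrix (Fin 2) (Fin 2) D := Matrix.of fun i j => y i * (t⁻¹ * x j) with hMdef
    set u : Fin 2 → D := fun i => y i * t⁻¹ with hudef
    have hs : w 0 * u 0 + w 1 * u 1 = 1 := by
      have e1 : w 0 * (y 0 * t⁻¹) + w 1 * (y 1 * t⁻¹) =
          (w 0 * y 0 + w 1 * y 1) * t⁻¹ := by noncomm_ring
      rw [hudef]
      simp only []
      rw [e1, ← htw, mul_inv_cancel₀ ht]
    have hrM : rowRank M = 1 := by
      apply aux_rowRank_one M u x hx
      · intro h
        obtain ⟨i, hi⟩ : ∃ i, y i ≠ 0 := by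
          by_contra hc; push_neg at hc; exact hy (funext hc)
        have := congrFun h i
        rw [hudef] at this
        simp only [Pi.zero_apply] at this
        exact hi (by
          have ht' : t⁻¹ ≠ 0 := inv_ne_zero ht
          rcases mul_eq_zero.mp this with h' | h'
          · exact h'
          · exact absurd h' ht')
      · intro i
        funext j
        show y i * (t⁻¹ * x j) = u i * x j
        rw [hudef]; simp only []; rw [mul_assoc]
    have hN : M * B - 1 =
        Matrix.of fun i j => u i * w j - (1 : Matrix (Fin 2) (Fin 2) D) i j := by
      ext i j
      simp only [Matrix.sub_apply, Matrix.mul_apply, Fin.sum_univ_two, Matrix.of_apply,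
        hMdef, hudef, hwdef]
      noncomm_ring
    have hMA : (M * B - 1) * A = M - A := by
      rw [sub_mul, Matrix.mul_assoc, hBA, Matrix.mul_one, Matrix.one_mul]
    have hwne : w ≠ 0 := by
      intro h
      rw [h] at hs
      simp at hs
    have hNne : M * B - 1 ≠ 0 := by
      intro h0
      have hMAeq : M = A := by
        have := hMA
        rw [h0, zero_mul] at this
        exact sub_eq_zero.mp this.symm
      rw [hMAeq, hA] at hrM
      omega
    have hdep : ∀ j, w 0 * ((M * B - 1) 0 j) + w 1 * ((M * B - 1) 1 j) = 0 := by
      intro j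
      rw [hN]
      show w 0 * (u 0 * w j - (1 : Matrix (Fin 2) (Fin 2) D) 0 j) +
        w 1 * (u 1 * w j - (1 : Matrix (Fin 2) (Fin 2) D) 1 j) = 0
      rw [dep_identity u w j, hs, one_mul, sub_self]
    have hrkN : rowRank (M * B - 1) = 1 :=
      aux_rowRank_one_of_dep _ w hwne hdep hNne
    refine ⟨M, ?_, ?_, hrM, ?_⟩
    · intro i
      apply Submodule.mem_span_singleton.mpr
      exact ⟨y i * t⁻¹, by funext j; show y i * t⁻¹ * x j = M i j; rw [hMdef]; simp only [Matrix.of_apply]; rw [mul_assoc]⟩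
    · intro j
      apply Submodule.mem_span_singleton.mpr
      exact ⟨MulOpposite.op (t⁻¹ * x j), by funext i; rfl⟩
    · unfold Adjacent
      rw [← hMA, aux_rowRank_mul hBA hAB]
      exact hrkN


/-- Corollary 3.6. For an invertible `A ∈ M₂(D)` (with inverse `B`),
`R_d ∩ L_e` contains a rank-1 matrix adjacent to `A` iff `d ≠ (A⁻¹e)^⊥`. -/
theorem stmt5 (A : Matrix (Fin 2) (Fin 2) D) (hA : rowRank A = 2)
    (d : Submodule D (Fin 2 → D)) (hd : Module.finrank D d = 1)
    (e : Submodule Dᵐᵒᵖ (Fin 2 → D)) (he : Module.finrank Dᵐᵒᵖ e = 1)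
    (B : Matrix (Fin 2) (Fin 2) D) (hBA : B * A = 1) (hAB : A * B = 1) :
    (∃ M : Matrix (Fin 2) (Fin 2) D,
        M ∈ Rsub d ∧ M ∈ Lsub e ∧ rowRank M = 1 ∧ Adjacent M A) ↔
      (d : Set (Fin 2 → D)) ≠ perpSet (B.mulVec '' (e : Set (Fin 2 → D))) := by
  obtain ⟨x, hx, rfl⟩ := exists_span_gen d hd
  obtain ⟨y, hy, rfl⟩ := exists_span_gen e he
  have hz : ¬ (B 0 0 * y 0 + B 0 1 * y 1 = 0 ∧ B 1 0 * y 0 + B 1 1 * y 1 = 0) := by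
    rintro ⟨h0, h1⟩
    have hy' : A.mulVec (B.mulVec y) = y := by
      rw [Matrix.mulVec_mulVec, hAB, Matrix.one_mulVec]
    have hBy : B.mulVec y = 0 := by
      funext i; fin_cases i
      · simpa [Matrix.mulVec, dotProduct, Fin.sum_univ_two] using h0
      · simpa [Matrix.mulVec, dotProduct, Fin.sum_univ_two] using h1
    rw [hBy, Matrix.mulVec_zero] at hy'
    exact hy hy'.symm
  rw [exists_rank_one_iff A B hA hBA hAB x y hx hy]
  simp only [ne_eq]
  rw [perp_eq_iff B x y hx hz]
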